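/- Let n be an odd positive integer, let d be a divisor of n, and let ν_1, …, ν_d be integers such that the multiset of ∼_d-classes of (ν_1, …, ν_d) equals the multiset of ∼_d-classes of (1, 2, …, d). Let b be an integer and let e be a divisor of the radical of d (the product of the distinct primes dividing d). Then the set {i : 1 ≤ i ≤ d, gcd(d, γ_n(ν_i)) = e, and ν_i ∼_{n/γ_n(ν_i)} b} has at most 2 elements. -/

import Mathlib

/-- `nPart n p = p^{v_p(n)}`, the `p`-part of `n`. -/
def nPart (n p : ℕ) : ℕ := p ^ (n.factorization p)

/-- The representative of `x` modulo `m` lying in the interval `(-m/2, m/2]`. -/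
def midRep (x : ℤ) (m : ℕ) : ℤ :=
  if 2 * (x % (m : ℤ)) ≤ (m : ℤ) then x % (m : ℤ) else x % (m : ℤ) - (m : ℤ)

/-- `|x|_m`, the absolute value of the representative of `x` modulo `m` in
`(-m/2, m/2]`. -/
def absRep (x : ℤ) (m : ℕ) : ℤ := |midRep x m|

/-- `γ_n(x)`, the product of the primes `p` dividing `n` with
`|x|_{n_p} < n_p/(2p)`. -/
def gammaFn (n : ℕ) (x : ℤ) : ℕ :=
  ∏ p ∈ n.primeFactors,
    if 2 * (p : ℤ) * absRep x (nPart n p) < (nPart n p : ℤ) then p else 1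

/-- The predicate describing membership in `𝔹_n ⊆ ℤ/nℤ`:
`|x|_{n_p} > n_p/(2p)` for every prime `p` dividing `n`. -/
def inBB (n : ℕ) (b : ZMod n) : Prop :=
  ∀ p ∈ n.primeFactors, (nPart n p : ℤ) < 2 * (p : ℤ) * absRep (b.val : ℤ) (nPart n p)


/-- `𝔹_n` realized as the finset of representatives `b ∈ {0, …, n−1}` with
`|b|_{n_p} > n_p/(2p)` for every prime `p` dividing `n`. -/
def BBFinset (n : ℕ) : Finset ℕ :=
  (Finset.range n).filter
    (fun b => ∀ p ∈ n.primeFactors,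
      (nPart n p : ℤ) < 2 * (p : ℤ) * absRep (b : ℤ) (nPart n p))

/-- The radical of `d`: the product of the distinct primes dividing `d`. -/
def radical (d : ℕ) : ℕ := ∏ p ∈ d.primeFactors, p

lemma midRep_modEq (x : ℤ) (m : ℕ) : midRep x m ≡ x [ZMOD (m:ℕ)] := by
  unfold midRep
  split
  · exact Int.emod_emod_of_dvd x dvd_rfl
  · calc x % (m:ℤ) - m ≡ x % m [ZMOD (m:ℕ)] := by
          simpa using (Int.ModEq.refl (x % m)).sub (Int.modEq_zero_iff_dvd.mpr dvd_rfl)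
       _ ≡ x [ZMOD (m:ℕ)] := Int.emod_emod_of_dvd x dvd_rfl

lemma midRep_bounds (x : ℤ) (m : ℕ) (hm : 0 < m) :
    -(m:ℤ) < 2 * midRep x m ∧ 2 * midRep x m ≤ m := by
  have h1 : 0 ≤ x % (m:ℤ) := Int.emod_nonneg x (by positivity)
  have h2 : x % (m:ℤ) < m := Int.emod_lt_of_pos x (by exact_mod_cast hm)
  unfold midRep; split <;> omega

lemma absRep_neg (x : ℤ) (m : ℕ) : absRep (-x) m = absRep x m := by
  rcases Nat.eq_zero_or_pos m with rfl | hm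
  · unfold absRep midRep; simp [Int.emod_zero]
  · have h1 := midRep_modEq x m
    have h2 := midRep_modEq (-x) m
    have h3 := midRep_bounds x m hm
    have h4 := midRep_bounds (-x) m hm
    have h5 : (m:ℤ) ∣ midRep (-x) m + midRep x m := by
      have := (h2.add h1).symm.dvd
      simpa using this
    obtain ⟨t, ht⟩ := h5
    have hmz : (0:ℤ) < m := by exact_mod_cast hm
    have h6 : t ≤ 1 := le_of_mul_le_mul_left (by rw [mul_one, ← ht]; linarith [h3.1, h3.2, h4.1, h4.2]) hmz
    have h7 : (-1:ℤ) < t := lt_of_mul_lt_mul_left (by rw [← ht]; linarith [h3.1, h3.2, h4.1, h4.2]) hmz.le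
    have ht' : t = 0 ∨ t = 1 := by omega
    unfold absRep
    rcases ht' with rfl | rfl
    · simp at ht
      have : midRep (-x) m = - midRep x m := by omega
      rw [this, abs_neg]
    · -- midRep (-x) m + midRep x m = m; with bounds: 2a ≤ m, 2b ≤ m, a+b=m ⇒ 2a=m=2b ⇒ a=b
      have : midRep (-x) m = midRep x m := by omega
      rw [this]

lemma gammaFn_eq_prod_filter (n : ℕ) (x : ℤ) :
    gammaFn n x = ∏ p ∈ n.primeFactors.filter
      (fun p : ℕ => 2 * (p:ℤ) * absRep x (nPart n p) < (nPart n p : ℤ)), p := by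
  rw [gammaFn, Finset.prod_filter]

lemma gammaFn_dvd (n : ℕ) (x : ℤ) : gammaFn n x ∣ n := by
  rw [gammaFn_eq_prod_filter]
  exact dvd_trans (Finset.prod_dvd_prod_of_subset _ _ _ (Finset.filter_subset _ _))
    (Nat.prod_primeFactors_dvd n)

lemma gammaFn_pos (n : ℕ) (x : ℤ) : 0 < gammaFn n x := by
  rw [gammaFn_eq_prod_filter]
  exact Finset.prod_pos fun p hp => (Nat.prime_of_mem_primeFactors (Finset.mem_filter.mp hp).1).pos

lemma prime_dvd_gammaFn_iff {p n : ℕ} (hp : p.Prime) (x : ℤ) :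
    p ∣ gammaFn n x ↔ p ∈ n.primeFactors ∧
      2 * (p:ℤ) * absRep x (nPart n p) < (nPart n p : ℤ) := by
  rw [gammaFn_eq_prod_filter]
  constructor
  · intro h
    obtain ⟨q, hq, hpq⟩ := (Prime.dvd_finset_prod_iff hp.prime id).mp h
    have hq' := Finset.mem_filter.mp hq
    have : p = q := (Nat.prime_dvd_prime_iff_eq hp
      (Nat.prime_of_mem_primeFactors hq'.1)).mp hpq
    subst this
    exact hq'
  · intro h
    exact Finset.dvd_prod_of_mem _ (Finset.mem_filter.mpr ⟨h.1, h.2⟩)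

lemma gammaFn_eq_mul {p n : ℕ} (hp : p.Prime) (x : ℤ)
    (h : p ∣ gammaFn n x) :
    ∃ g', gammaFn n x = p * g' ∧ ¬ p ∣ g' := by
  rw [gammaFn_eq_prod_filter] at h ⊢
  set t := n.primeFactors.filter
      (fun p : ℕ => 2 * (p:ℤ) * absRep x (nPart n p) < (nPart n p : ℤ)) with ht
  have hpt : p ∈ t := by
    obtain ⟨q, hq, hpq⟩ := (Prime.dvd_finset_prod_iff hp.prime id).mp h
    have : p = q := (Nat.prime_dvd_prime_iff_eq hp
      (Nat.prime_of_mem_primeFactors (Finset.mem_filter.mp hq).1)).mp hpq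
    subst this; exact hq
  refine ⟨∏ q ∈ t.erase p, q, (Finset.mul_prod_erase t _ hpt).symm, ?_⟩
  intro hcon
  obtain ⟨q, hq, hpq⟩ := (Prime.dvd_finset_prod_iff hp.prime id).mp hcon
  have : p = q := (Nat.prime_dvd_prime_iff_eq hp
    (Nat.prime_of_mem_primeFactors (Finset.mem_filter.mp (Finset.mem_of_mem_erase hq)).1)).mp hpq
  subst this
  exact (Finset.ne_of_mem_erase hq) rfl

lemma nPart_dvd (n p : ℕ) : nPart n p ∣ n := Nat.ordProj_dvd n p

lemma nPart_dvd_div {n p : ℕ} (hn : n ≠ 0) (hp : p.Prime) (x : ℤ)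
    (hpg : ¬ p ∣ gammaFn n x) : nPart n p ∣ n / gammaFn n x := by
  have hγ : gammaFn n x ∣ n := gammaFn_dvd n x
  have hm : gammaFn n x * (n / gammaFn n x) = n := Nat.mul_div_cancel' hγ
  have hco : Nat.Coprime (nPart n p) (gammaFn n x) :=
    Nat.Coprime.pow_left _ ((Nat.Prime.coprime_iff_not_dvd hp).mpr hpg)
  exact hco.dvd_of_dvd_mul_left (by rw [hm]; exact nPart_dvd n p)

lemma nPart_div_p_dvd_div {n p : ℕ} (hn : n ≠ 0) (hp : p.Prime) (x : ℤ)
    (hpg : p ∣ gammaFn n x) :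
    p ^ (n.factorization p - 1) ∣ n / gammaFn n x := by
  obtain ⟨g', hg', hpg'⟩ := gammaFn_eq_mul hp x hpg
  have hγ : gammaFn n x ∣ n := gammaFn_dvd n x
  have hm : gammaFn n x * (n / gammaFn n x) = n := Nat.mul_div_cancel' hγ
  have hk : 1 ≤ n.factorization p := by
    have hpn : p ∣ n := hpg.trans hγ
    exact (Nat.Prime.factorization_pos_of_dvd hp hn hpn)
  have hdvd : p ^ n.factorization p ∣ p * (g' * (n / gammaFn n x)) := by
    rw [← mul_assoc, ← hg', hm]; exact nPart_dvd n p
  have hdvd' : p ^ (n.factorization p - 1) ∣ g' * (n / gammaFn n x) := by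
    have h1 : p * p ^ (n.factorization p - 1) ∣ p * (g' * (n / gammaFn n x)) := by
      rw [← pow_succ']
      have : n.factorization p - 1 + 1 = n.factorization p := by omega
      rw [this]; exact hdvd
    exact (Nat.mul_dvd_mul_iff_left hp.pos).mp h1
  have hco : Nat.Coprime (p ^ (n.factorization p - 1)) g' :=
    Nat.Coprime.pow_left _ ((Nat.Prime.coprime_iff_not_dvd hp).mpr hpg')
  exact hco.dvd_of_dvd_mul_left hdvd'

lemma small_upgrade {p k : ℕ} (hp : p.Prime) (hk : 1 ≤ k) {x y : ℤ}
    (hx : 2 * (p:ℤ) * absRep x (p^k) < ((p^k : ℕ) : ℤ))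
    (hy : 2 * (p:ℤ) * absRep y (p^k) < ((p^k : ℕ) : ℤ))
    (hxy : x ≡ y [ZMOD ((p^(k-1) : ℕ) : ℤ)]) : x ≡ y [ZMOD ((p^k : ℕ) : ℤ)] := by
  have hdvd : ((p^(k-1) : ℕ) : ℤ) ∣ ((p^k : ℕ) : ℤ) := by
    exact_mod_cast Int.natCast_dvd_natCast.mpr (pow_dvd_pow p (by omega))
  have hr := midRep_modEq x (p^k)
  have hs := midRep_modEq y (p^k)
  have hrs : midRep x (p^k) ≡ midRep y (p^k) [ZMOD ((p^(k-1) : ℕ) : ℤ)] :=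
    ((hr.of_dvd hdvd).trans hxy).trans (hs.of_dvd hdvd).symm
  have hd2 : ((p^(k-1):ℕ):ℤ) ∣ midRep y (p^k) - midRep x (p^k) := hrs.dvd
  have habs : |midRep y (p^k) - midRep x (p^k)| < ((p^(k-1):ℕ):ℤ) := by
    have hp2 : (2:ℤ) ≤ (p:ℤ) := by exact_mod_cast hp.two_le
    have hpk : ((p^k:ℕ):ℤ) = (p:ℤ) * ((p^(k-1):ℕ):ℤ) := by
      push_cast
      rw [← pow_succ']
      congr 1; omega
    unfold absRep at hx hy
    have h1 : (p:ℤ) * |midRep y (p^k) - midRep x (p^k)| < (p:ℤ) * ((p^(k-1):ℕ):ℤ) := by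
      calc (p:ℤ) * |midRep y (p^k) - midRep x (p^k)|
          ≤ (p:ℤ) * (|midRep y (p^k)| + |midRep x (p^k)|) := by
            apply mul_le_mul_of_nonneg_left (abs_sub _ _) (by positivity)
        _ < (p:ℤ) * ((p^(k-1):ℕ):ℤ) := by rw [← hpk]; nlinarith [abs_nonneg (midRep x (p^k)), abs_nonneg (midRep y (p^k))]
    exact lt_of_mul_lt_mul_left h1 (by positivity)
  have : midRep y (p^k) - midRep x (p^k) = 0 :=
    Int.eq_zero_of_abs_lt_dvd hd2 habs
  have heq : midRep x (p^k) = midRep y (p^k) := by omega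
  calc x ≡ midRep x (p^k) [ZMOD ((p^k:ℕ):ℤ)] := hr.symm
    _ = midRep y (p^k) := heq
    _ ≡ y [ZMOD ((p^k:ℕ):ℤ)] := hs

lemma key {n : ℕ} (hn : 0 < n) {d : ℕ} (hd : d ∣ n) {e : ℕ}
    {x y c : ℤ}
    (hx : Nat.gcd d (gammaFn n x) = e) (hy : Nat.gcd d (gammaFn n y) = e)
    (hxc : x ≡ c [ZMOD ((n / gammaFn n x : ℕ) : ℤ)])
    (hyc : y ≡ c [ZMOD ((n / gammaFn n y : ℕ) : ℤ)]) :
    x ≡ y [ZMOD (d : ℤ)] := by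
  have hn0 : n ≠ 0 := hn.ne'
  have hd0 : d ≠ 0 := by rintro rfl; exact hn0 (Nat.eq_zero_of_zero_dvd hd)
  rw [Int.modEq_iff_dvd]
  have hdn : d = ∏ p ∈ d.primeFactors, p ^ d.factorization p := by
    conv_lhs => rw [← Nat.factorization_prod_pow_eq_self hd0]
    rw [Finsupp.prod, Nat.support_factorization]
  have hdprod : (d:ℤ) = ∏ p ∈ d.primeFactors, (p:ℤ) ^ d.factorization p := by
    conv_lhs => rw [hdn]
    push_cast
    rfl
  rw [hdprod]
  apply Finset.prod_dvd_of_coprime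
  · intro p hp q hq hpq
    have hpp := Nat.prime_of_mem_primeFactors hp
    have hqp := Nat.prime_of_mem_primeFactors hq
    have hco : Nat.Coprime (p ^ d.factorization p) (q ^ d.factorization q) :=
      Nat.Coprime.pow _ _ ((Nat.coprime_primes hpp hqp).mpr hpq)
    have := hco.isCoprime
    simpa using this
  · intro p hp
    have hpp := Nat.prime_of_mem_primeFactors hp
    have hpd : p ∣ d := Nat.dvd_of_mem_primeFactors hp
    have hpn' : p ∈ n.primeFactors :=
      Nat.mem_primeFactors.mpr ⟨hpp, hpd.trans hd, hn0⟩
    have hkd : d.factorization p ≤ n.factorization p :=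
      (Nat.factorization_le_iff_dvd hd0 hn0).mpr hd p
    set k := n.factorization p with hkdef
    have hk1 : 1 ≤ k := Nat.Prime.factorization_pos_of_dvd hpp hn0 (hpd.trans hd)
    -- enough: x ≡ y [ZMOD p ^ d.factorization p]
    suffices hmod : x ≡ y [ZMOD ((p ^ d.factorization p : ℕ) : ℤ)] by
      have := hmod.dvd
      simpa using this
    by_cases hpe : p ∣ e
    · -- p divides gammaFn of both x and y
      have hpgx : p ∣ gammaFn n x := hpe.trans (hx ▸ Nat.gcd_dvd_right d _)
      have hpgy : p ∣ gammaFn n y := hpe.trans (hy ▸ Nat.gcd_dvd_right d _)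
      have hsx := ((prime_dvd_gammaFn_iff hpp x).mp hpgx).2
      have hsy := ((prime_dvd_gammaFn_iff hpp y).mp hpgy).2
      have hdx : (((p ^ (k-1) : ℕ)) : ℤ) ∣ ((n / gammaFn n x : ℕ) : ℤ) :=
        Int.natCast_dvd_natCast.mpr (nPart_div_p_dvd_div hn0 hpp x hpgx)
      have hdy : (((p ^ (k-1) : ℕ)) : ℤ) ∣ ((n / gammaFn n y : ℕ) : ℤ) :=
        Int.natCast_dvd_natCast.mpr (nPart_div_p_dvd_div hn0 hpp y hpgy)
      have hxy : x ≡ y [ZMOD ((p ^ (k-1) : ℕ) : ℤ)] :=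
        (hxc.of_dvd hdx).trans (hyc.of_dvd hdy).symm
      have hnp : nPart n p = p ^ k := rfl
      rw [hnp] at hsx hsy
      have hfull : x ≡ y [ZMOD ((p ^ k : ℕ) : ℤ)] := small_upgrade hpp hk1 hsx hsy hxy
      exact hfull.of_dvd (Int.natCast_dvd_natCast.mpr (pow_dvd_pow p hkd))
    · -- p does not divide gammaFn of x or y
      have hpgx : ¬ p ∣ gammaFn n x := fun h =>
        hpe (hx ▸ Nat.dvd_gcd hpd h)
      have hpgy : ¬ p ∣ gammaFn n y := fun h =>
        hpe (hy ▸ Nat.dvd_gcd hpd h)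
      have hdx : (((p ^ k : ℕ)) : ℤ) ∣ ((n / gammaFn n x : ℕ) : ℤ) :=
        Int.natCast_dvd_natCast.mpr (nPart_dvd_div hn0 hpp x hpgx)
      have hdy : (((p ^ k : ℕ)) : ℤ) ∣ ((n / gammaFn n y : ℕ) : ℤ) :=
        Int.natCast_dvd_natCast.mpr (nPart_dvd_div hn0 hpp y hpgy)
      have hxy : x ≡ y [ZMOD ((p ^ k : ℕ) : ℤ)] :=
        (hxc.of_dvd hdx).trans (hyc.of_dvd hdy).symm
      exact hxy.of_dvd (Int.natCast_dvd_natCast.mpr (pow_dvd_pow p hkd))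

lemma gammaFn_neg (n : ℕ) (x : ℤ) : gammaFn n (-x) = gammaFn n x := by
  unfold gammaFn
  simp only [absRep_neg]

lemma rel_trans {d : ℕ} {u v w : ℤ}
    (h1 : u ≡ v [ZMOD (d:ℤ)] ∨ u ≡ -v [ZMOD (d:ℤ)])
    (h2 : v ≡ w [ZMOD (d:ℤ)] ∨ v ≡ -w [ZMOD (d:ℤ)]) :
    u ≡ w [ZMOD (d:ℤ)] ∨ u ≡ -w [ZMOD (d:ℤ)] := by
  rcases h1 with h1 | h1 <;> rcases h2 with h2 | h2
  · exact Or.inl (h1.trans h2)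
  · exact Or.inr (h1.trans h2)
  · exact Or.inr (h1.trans (by simpa using h2.neg))
  · exact Or.inl (h1.trans (by simpa using h2.neg))

lemma rel_symm {d : ℕ} {u v : ℤ}
    (h : u ≡ v [ZMOD (d:ℤ)] ∨ u ≡ -v [ZMOD (d:ℤ)]) :
    v ≡ u [ZMOD (d:ℤ)] ∨ v ≡ -u [ZMOD (d:ℤ)] := by
  rcases h with h | h
  · exact Or.inl h.symm
  · exact Or.inr (by simpa using h.neg.symm)

lemma eq_of_small {d : ℕ} {u v : ℤ} (h : u ≡ v [ZMOD (d:ℤ)])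
    (hu1 : 1 ≤ u) (hu2 : u ≤ d) (hv1 : 1 ≤ v) (hv2 : v ≤ d) : u = v := by
  have hd : v - u = 0 := Int.eq_zero_of_abs_lt_dvd h.dvd (abs_lt.mpr ⟨by omega, by omega⟩)
  omega


/-- **Lemma (At most two indices per level).** Let `n` be odd, `d ∣ n`, and let
`ν_1, …, ν_d` be integers whose multiset of `∼_d`-classes coincides with that of
`(1, …, d)`.  For any integer `b` and any divisor `e` of the radical of `d`, the
set `{i : gcd(d, γ_n(ν_i)) = e and ν_i ∼_{n/γ_n(ν_i)} b}` has at most two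
elements. -/
theorem card_level_le_two (n : ℕ) (hn : 0 < n) (hodd : Odd n)
    (d : ℕ) (hd : d ∣ n)
    (ν : Fin d → ℤ)
    (hperm : ∃ σ : Equiv.Perm (Fin d), ∀ i : Fin d,
      ν (σ i) ≡ ((i : ℤ) + 1) [ZMOD d] ∨ ν (σ i) ≡ -((i : ℤ) + 1) [ZMOD d])
    (b : ℤ) (e : ℕ) (he : e ∣ radical d) :
    ({i : Fin d | Nat.gcd d (gammaFn n (ν i)) = e ∧
        (ν i ≡ b [ZMOD ((n / gammaFn n (ν i) : ℕ) : ℕ)] ∨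
          ν i ≡ -b [ZMOD ((n / gammaFn n (ν i) : ℕ) : ℕ)])} : Set (Fin d)).ncard ≤ 2 := by
  by_contra hcon
  push_neg at hcon
  rw [Set.two_lt_ncard_iff] at hcon
  obtain ⟨i, j, k, hi, hj, hk, hij, hik, hjk⟩ := hcon
  simp only [Set.mem_setOf_eq] at hi hj hk
  obtain ⟨σ, hσ⟩ := hperm
  -- pairwise relation from the key lemma
  have P : ∀ {a c : Fin d},
      Nat.gcd d (gammaFn n (ν a)) = e →
      (ν a ≡ b [ZMOD ((n / gammaFn n (ν a) : ℕ) : ℤ)] ∨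
        ν a ≡ -b [ZMOD ((n / gammaFn n (ν a) : ℕ) : ℤ)]) →
      Nat.gcd d (gammaFn n (ν c)) = e →
      (ν c ≡ b [ZMOD ((n / gammaFn n (ν c) : ℕ) : ℤ)] ∨
        ν c ≡ -b [ZMOD ((n / gammaFn n (ν c) : ℕ) : ℤ)]) →
      ν a ≡ ν c [ZMOD (d:ℤ)] ∨ ν a ≡ -ν c [ZMOD (d:ℤ)] := by
    intro a c ha1 ha2 hc1 hc2
    rcases ha2 with ha2 | ha2 <;> rcases hc2 with hc2 | hc2
    · exact Or.inl (key hn hd ha1 hc1 ha2 hc2)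
    · refine Or.inr (key hn hd ha1 ?_ ha2 ?_)
      · rw [gammaFn_neg]; exact hc1
      · rw [gammaFn_neg]; simpa using hc2.neg
    · refine Or.inr ?_
      have : -ν a ≡ ν c [ZMOD (d:ℤ)] := by
        refine key hn hd ?_ hc1 ?_ hc2
        · rw [gammaFn_neg]; exact ha1
        · rw [gammaFn_neg]; simpa using ha2.neg
      simpa using this.neg
    · exact Or.inl (key hn hd ha1 hc1 ha2 hc2)
  have Pij := P hi.1 hi.2 hj.1 hj.2
  have Pik := P hi.1 hi.2 hk.1 hk.2
  -- translate to the canonical values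
  set A : ℤ := ((σ.symm i : Fin d) : ℤ) + 1 with hAdef
  set B : ℤ := ((σ.symm j : Fin d) : ℤ) + 1 with hBdef
  set C : ℤ := ((σ.symm k : Fin d) : ℤ) + 1 with hCdef
  have hA : ν i ≡ A [ZMOD (d:ℤ)] ∨ ν i ≡ -A [ZMOD (d:ℤ)] := by
    have := hσ (σ.symm i); rwa [Equiv.apply_symm_apply] at this
  have hB : ν j ≡ B [ZMOD (d:ℤ)] ∨ ν j ≡ -B [ZMOD (d:ℤ)] := by
    have := hσ (σ.symm j); rwa [Equiv.apply_symm_apply] at this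
  have hC : ν k ≡ C [ZMOD (d:ℤ)] ∨ ν k ≡ -C [ZMOD (d:ℤ)] := by
    have := hσ (σ.symm k); rwa [Equiv.apply_symm_apply] at this
  have hAB := rel_trans (rel_trans (rel_symm hA) Pij) hB
  have hAC := rel_trans (rel_trans (rel_symm hA) Pik) hC
  have bound : ∀ m : Fin d, (1:ℤ) ≤ (m:ℤ) + 1 ∧ ((m:ℤ) + 1) ≤ d := by
    intro m
    have := m.is_lt
    constructor <;> [omega; exact_mod_cast by omega]
  have idx_eq : ∀ {a c : Fin d},
      (((σ.symm a : Fin d) : ℤ) + 1) = (((σ.symm c : Fin d) : ℤ) + 1) → a = c := by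
    intro a c h
    have : ((σ.symm a : Fin d) : ℤ) = ((σ.symm c : Fin d) : ℤ) := by omega
    have h2 : (σ.symm a : Fin d) = σ.symm c := Fin.ext (by exact_mod_cast this)
    simpa using congrArg σ h2
  have bA := bound (σ.symm i)
  have bB := bound (σ.symm j)
  have bC := bound (σ.symm k)
  rcases hAB with hAB | hAB
  · exact hij (idx_eq (eq_of_small hAB bA.1 bA.2 bB.1 bB.2))
  · rcases hAC with hAC | hAC
    · exact hik (idx_eq (eq_of_small hAC bA.1 bA.2 bC.1 bC.2))
    · have hBC : B ≡ C [ZMOD (d:ℤ)] := by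
        have h1 : B ≡ -A [ZMOD (d:ℤ)] := by simpa using hAB.neg.symm
        have h2 : -A ≡ C [ZMOD (d:ℤ)] := by simpa using hAC.neg
        exact h1.trans h2
      exact hjk (idx_eq (eq_of_small hBC bB.1 bB.2 bC.1 bC.2))
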